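/- Let λ(t) = C_ℓ t^{1/2} K_{1/(2ℓ+2)}(t^{ℓ+1}/(ℓ+1)) with ℓ ≥ 0 and K_α the modified Bessel function of the second kind. Then λ(t) and -λ'(t) are both positive and decreasing on [t₀,∞), lim_{t→∞} λ(t) = lim_{t→∞} λ'(t) = 0, and there exists C > 1 such that 1/C ≤ -λ'(t)/(λ(t) t^ℓ) ≤ C for all t ≥ t₀. -/

import Mathlib

open Filter MeasureTheory Real Set

/-- The modified Bessel function of the second kind,
`K_α(t) = ∫₀^∞ e^{-t cosh z} cosh(αz) dz`. -/
noncomputable def besselK (α t : ℝ) : ℝ :=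
  ∫ z in Set.Ioi (0 : ℝ), Real.exp (-t * Real.cosh z) * Real.cosh (α * z)

lemma cosh_lb (z : ℝ) (hz : 0 ≤ z) : 1 + z^2/8 ≤ Real.cosh z := by
  have h1 : 1 + z/2 ≤ Real.exp (z/2) := by linarith [Real.add_one_le_exp (z/2)]
  have h2 : 1 - z ≤ Real.exp (-z) := by linarith [Real.add_one_le_exp (-z)]
  have h3 : (1 + z/2)^2 ≤ Real.exp z := by
    have := Real.exp_nonneg (z/2)
    calc (1 + z/2)^2 ≤ (Real.exp (z/2))^2 := by nlinarith
    _ = Real.exp z := by rw [sq, ← Real.exp_add]; norm_num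
  rw [Real.cosh_eq]
  nlinarith

lemma cosh_le_exp_abs (w : ℝ) : Real.cosh w ≤ Real.exp |w| := by
  rw [Real.cosh_eq]
  have h1 : Real.exp w ≤ Real.exp |w| := Real.exp_le_exp.2 (le_abs_self w)
  have h2 : Real.exp (-w) ≤ Real.exp |w| := Real.exp_le_exp.2 (neg_le_abs w)
  linarith

lemma abs_sinh_le_cosh (w : ℝ) : |Real.sinh w| ≤ Real.cosh w := by
  rw [abs_le, Real.sinh_eq, Real.cosh_eq]
  constructor <;> nlinarith [Real.exp_pos w, Real.exp_pos (-w)]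

lemma key_bound (x b z : ℝ) (hx : 0 < x) (hz : 0 ≤ z) :
    Real.exp (-x * Real.cosh z) * Real.exp (b * z)
      ≤ Real.exp (2*(b+1)^2/x - x) * Real.exp (-z) := by
  rw [← Real.exp_add, ← Real.exp_add]
  apply Real.exp_le_exp.2
  have hc := cosh_lb z hz
  have h1 : -x * Real.cosh z ≤ -x * (1 + z^2/8) := by nlinarith
  have h2 : x*(b+1)*z ≤ x^2*z^2/8 + 2*(b+1)^2 := by nlinarith [sq_nonneg (x*z - 4*(b+1))]
  have h3 : (b+1)*z ≤ x*z^2/8 + 2*(b+1)^2/x := by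
    rw [← sub_nonneg]
    have : x*z^2/8 + 2*(b+1)^2/x - (b+1)*z = (x^2*z^2/8 + 2*(b+1)^2 - x*(b+1)*z)/x := by
      field_simp
    rw [this]
    apply div_nonneg (by linarith) hx.le
  nlinarith

lemma integrable_master (x b : ℝ) (hx : 0 < x) (f : ℝ → ℝ)
    (hm : AEStronglyMeasurable f (volume.restrict (Ioi 0)))
    (hb : ∀ z ∈ Ioi (0:ℝ), |f z| ≤ Real.exp (-x * Real.cosh z) * Real.exp (b * z)) :
    IntegrableOn f (Ioi 0) := by
  apply Integrable.mono'
    (((exp_neg_integrableOn_Ioi 0 one_pos)).const_mul (Real.exp (2*(b+1)^2/x - x))) hm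
  filter_upwards [ae_restrict_mem measurableSet_Ioi] with z hz
  calc ‖f z‖ = |f z| := rfl
  _ ≤ Real.exp (-x * Real.cosh z) * Real.exp (b * z) := hb z hz
  _ ≤ Real.exp (2*(b+1)^2/x - x) * Real.exp (-z) := key_bound x b z hx (le_of_lt hz)
  _ = Real.exp (2*(b+1)^2/x - x) * Real.exp (-1 * z) := by norm_num

lemma cosh_mul_le (c z : ℝ) (hz : 0 ≤ z) : Real.cosh (c*z) ≤ Real.exp (|c| * z) := by
  refine le_trans (cosh_le_exp_abs _) (Real.exp_le_exp.2 ?_)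
  rw [abs_mul, abs_of_nonneg hz]

lemma besselK_integrableOn (α : ℝ) {x : ℝ} (hx : 0 < x) :
    IntegrableOn (fun z => Real.exp (-x * Real.cosh z) * Real.cosh (α * z)) (Ioi 0) := by
  apply integrable_master x |α| hx
  · exact (Continuous.aestronglyMeasurable (by continuity))
  · intro z hz
    rw [abs_mul, abs_of_pos (Real.exp_pos _), abs_of_pos (Real.cosh_pos _)]
    exact mul_le_mul_of_nonneg_left (cosh_mul_le α z (le_of_lt hz)) (Real.exp_pos _).le

lemma integrableOn_cosh_mul (α : ℝ) {x : ℝ} (hx : 0 < x) :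
    IntegrableOn (fun z => Real.exp (-x * Real.cosh z) * (Real.cosh z * Real.cosh (α * z)))
      (Ioi 0) := by
  apply integrable_master x (1 + |α|) hx
  · exact (Continuous.aestronglyMeasurable (by continuity))
  · intro z hz
    have hz' : (0:ℝ) ≤ z := le_of_lt hz
    rw [abs_mul, abs_of_pos (Real.exp_pos _), abs_of_pos (by positivity)]
    have h1 : Real.cosh z ≤ Real.exp z := by
      have := cosh_le_exp_abs z; rwa [abs_of_nonneg hz'] at this
    have h2 : Real.cosh (α*z) ≤ Real.exp (|α| * z) := cosh_mul_le α z hz'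
    have : Real.cosh z * Real.cosh (α*z) ≤ Real.exp ((1+|α|)*z) := by
      rw [show (1+|α|)*z = z + |α| * z by ring, Real.exp_add]
      exact mul_le_mul h1 h2 (Real.cosh_pos _).le (Real.exp_pos _).le
    exact mul_le_mul_of_nonneg_left this (Real.exp_pos _).le

lemma integrableOn_sinh_sinh (α : ℝ) {x : ℝ} (hx : 0 < x) :
    IntegrableOn (fun z => Real.exp (-x * Real.cosh z) * (Real.sinh z * Real.sinh (α * z)))
      (Ioi 0) := by
  apply integrable_master x (1 + |α|) hx
  · exact (Continuous.aestronglyMeasurable (by continuity))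
  · intro z hz
    have hz' : (0:ℝ) ≤ z := le_of_lt hz
    rw [abs_mul, abs_of_pos (Real.exp_pos _), abs_mul]
    have h1 : |Real.sinh z| ≤ Real.exp z := by
      refine le_trans (abs_sinh_le_cosh z) ?_
      have := cosh_le_exp_abs z; rwa [abs_of_nonneg hz'] at this
    have h2 : |Real.sinh (α*z)| ≤ Real.exp (|α| * z) :=
      le_trans (abs_sinh_le_cosh _) (cosh_mul_le α z hz')
    have : |Real.sinh z| * |Real.sinh (α*z)| ≤ Real.exp ((1+|α|)*z) := by
      rw [show (1+|α|)*z = z + |α| * z by ring, Real.exp_add]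
      exact mul_le_mul h1 h2 (abs_nonneg _) (Real.exp_pos _).le
    exact mul_le_mul_of_nonneg_left this (Real.exp_pos _).le

lemma besselK_pos (α : ℝ) {x : ℝ} (hx : 0 < x) : 0 < besselK α x := by
  rw [besselK, MeasureTheory.setIntegral_pos_iff_support_of_nonneg_ae]
  · have : Function.support (fun z => Real.exp (-x * Real.cosh z) * Real.cosh (α * z)) = univ := by
      ext z; simp [Function.support, (Real.exp_pos _).ne', (Real.cosh_pos _).ne']
    rw [this, univ_inter, Real.volume_Ioi]
    norm_num
  · filter_upwards with z
    positivity
  · exact besselK_integrableOn α hx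

lemma besselK_decay (α : ℝ) {w x : ℝ} (hw : 0 < w) (hwx : w ≤ x) :
    besselK α x ≤ Real.exp (-(x - w)) * besselK α w := by
  rw [besselK, besselK, ← MeasureTheory.integral_const_mul]
  apply MeasureTheory.setIntegral_mono_on
  · exact besselK_integrableOn α (lt_of_lt_of_le hw hwx)
  · exact ((besselK_integrableOn α hw).const_mul _)
  · exact measurableSet_Ioi
  · intro z hz
    have h1 : Real.exp (-x * Real.cosh z) ≤ Real.exp (-(x - w)) * Real.exp (-w * Real.cosh z) := by
      rw [← Real.exp_add, Real.exp_le_exp]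
      have := Real.one_le_cosh z
      nlinarith
    calc Real.exp (-x * Real.cosh z) * Real.cosh (α * z)
        ≤ (Real.exp (-(x - w)) * Real.exp (-w * Real.cosh z)) * Real.cosh (α * z) :=
          mul_le_mul_of_nonneg_right h1 (Real.cosh_pos _).le
      _ = Real.exp (-(x - w)) * (Real.exp (-w * Real.cosh z) * Real.cosh (α * z)) := by ring

lemma tendsto_exp_neg_cosh (α x : ℝ) (hx : 0 < x) :
    Tendsto (fun z => Real.exp (-x * Real.cosh z) * Real.sinh (α * z)) atTop (nhds 0) := by
  apply squeeze_zero_norm' (a := fun z => Real.exp (2*(|α|+1)^2/x - x) * Real.exp (-z))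
  · filter_upwards [eventually_ge_atTop (0:ℝ)] with z hz
    calc ‖Real.exp (-x * Real.cosh z) * Real.sinh (α * z)‖
        = Real.exp (-x * Real.cosh z) * |Real.sinh (α * z)| := by
          rw [norm_mul, Real.norm_eq_abs, Real.norm_eq_abs, abs_of_pos (Real.exp_pos _)]
      _ ≤ Real.exp (-x * Real.cosh z) * Real.exp (|α| * z) := by
          exact mul_le_mul_of_nonneg_left
            (le_trans (abs_sinh_le_cosh _) (cosh_mul_le α z hz)) (Real.exp_pos _).le
      _ ≤ Real.exp (2*(|α|+1)^2/x - x) * Real.exp (-z) := key_bound x |α| z hx hz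
  · rw [show (0:ℝ) = Real.exp (2*(|α|+1)^2/x - x) * 0 by ring]
    exact (Real.tendsto_exp_atBot.comp tendsto_neg_atTop_atBot).const_mul _

lemma sinh_sinh_integral (α : ℝ) {x : ℝ} (hx : 0 < x) :
    ∫ z in Ioi (0:ℝ), Real.exp (-x * Real.cosh z) * (Real.sinh z * Real.sinh (α * z))
      = (α / x) * besselK α x := by
  set f : ℝ → ℝ := fun z => -(1/x) * (Real.exp (-x * Real.cosh z) * Real.sinh (α * z)) with hf
  set f' : ℝ → ℝ := fun z => Real.exp (-x * Real.cosh z) * (Real.sinh z * Real.sinh (α * z))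
      - (α/x) * (Real.exp (-x * Real.cosh z) * Real.cosh (α * z)) with hf'
  have hderiv : ∀ z : ℝ, HasDerivAt f (f' z) z := by
    intro z
    have h1 : HasDerivAt (fun z => Real.exp (-x * Real.cosh z))
        (-x * Real.sinh z * Real.exp (-x * Real.cosh z)) z := by
      have := ((Real.hasDerivAt_cosh z).const_mul (-x)).exp
      simpa [mul_comm] using this
    have h2 : HasDerivAt (fun z => Real.sinh (α * z)) (α * Real.cosh (α * z)) z := by
      have := (Real.hasDerivAt_sinh (α * z)).comp z ((hasDerivAt_id z).const_mul α)
      simpa [mul_comm, Function.comp_def] using this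
    have := (h1.mul h2).const_mul (-(1/x))
    refine this.congr_deriv ?_
    simp only [hf']
    field_simp [hf']
    ring
  have hint : IntegrableOn f' (Ioi 0) :=
    (integrableOn_sinh_sinh α hx).sub ((besselK_integrableOn α hx).const_mul _)
  have hlim : Tendsto f atTop (nhds 0) := by
    rw [show (0:ℝ) = -(1/x) * 0 by ring]
    exact (tendsto_exp_neg_cosh α x hx).const_mul _
  have key := MeasureTheory.integral_Ioi_of_hasDerivAt_of_tendsto
    (Continuous.continuousWithinAt (by fun_prop)) (fun z _ => hderiv z) hint hlim
  have hf0 : f 0 = 0 := by simp [hf]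
  rw [hf0, sub_zero] at key
  have := MeasureTheory.integral_sub (integrableOn_sinh_sinh α hx)
    ((besselK_integrableOn α hx).const_mul (α/x))
  rw [hf'] at key
  simp only at key
  rw [this] at key
  rw [MeasureTheory.integral_const_mul] at key
  have hbk : (∫ z in Ioi (0:ℝ), Real.exp (-x * Real.cosh z) * Real.cosh (α * z)) = besselK α x := rfl
  rw [hbk] at key
  linarith

lemma besselK_hasDerivAt (α : ℝ) {x : ℝ} (hx : 0 < x) :
    HasDerivAt (besselK α) (-((α/x) * besselK α x + besselK (1-α) x)) x := by
  have hx2 : 0 < x/2 := by linarith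
  set F : ℝ → ℝ → ℝ := fun t z => Real.exp (-t * Real.cosh z) * Real.cosh (α * z) with hF
  set F' : ℝ → ℝ → ℝ := fun t z =>
    (-Real.cosh z) * Real.exp (-t * Real.cosh z) * Real.cosh (α * z) with hF'
  set bound : ℝ → ℝ := fun z => Real.exp (-(x/2) * Real.cosh z) * Real.exp ((1+|α|) * z)
    with hbound
  have key := hasDerivAt_integral_of_dominated_loc_of_deriv_le
    (μ := volume.restrict (Ioi 0)) (F := F) (F' := F') (x₀ := x) (bound := bound) (Metric.ball_mem_nhds x hx2)
    ?_ ?_ ?_ ?_ ?_ ?_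
  · obtain ⟨hI, hD⟩ := key
    have h1 : (fun t => ∫ z, F t z ∂(volume.restrict (Ioi 0))) = besselK α := rfl
    rw [h1] at hD
    have h2 : (∫ z, F' x z ∂(volume.restrict (Ioi 0)))
        = -((α/x) * besselK α x + besselK (1-α) x) := by
      have heq : ∀ z : ℝ, F' x z
          = -(Real.exp (-x * Real.cosh z) * Real.cosh ((1-α) * z)
              + Real.exp (-x * Real.cosh z) * (Real.sinh z * Real.sinh (α * z))) := by
        intro z
        have : Real.cosh ((1-α) * z) = Real.cosh z * Real.cosh (α*z)
            - Real.sinh z * Real.sinh (α*z) := by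
          rw [show (1-α) * z = z - α * z by ring, Real.cosh_sub]
        rw [hF']; simp only
        rw [this]; ring
      simp only [heq]
      rw [MeasureTheory.integral_neg, MeasureTheory.integral_add
        (besselK_integrableOn (1-α) hx) (integrableOn_sinh_sinh α hx),
        sinh_sinh_integral α hx]
      have hbk : (∫ z in Ioi (0:ℝ), Real.exp (-x * Real.cosh z) * Real.cosh ((1-α) * z))
          = besselK (1-α) x := rfl
      rw [hbk]; ring
    rwa [h2] at hD
  · filter_upwards with t
    exact Continuous.aestronglyMeasurable (by continuity)
  · exact besselK_integrableOn α hx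
  · exact Continuous.aestronglyMeasurable (by continuity)
  · filter_upwards [ae_restrict_mem measurableSet_Ioi] with z hz t ht
    have hz' : (0:ℝ) ≤ z := le_of_lt hz
    have ht' : x/2 ≤ t := by
      rw [Metric.mem_ball, Real.dist_eq, abs_lt] at ht
      linarith
    have h1 : Real.exp (-t * Real.cosh z) ≤ Real.exp (-(x/2) * Real.cosh z) := by
      apply Real.exp_le_exp.2
      nlinarith [Real.cosh_pos z]
    calc ‖F' t z‖ = Real.cosh z * Real.exp (-t * Real.cosh z) * Real.cosh (α * z) := by
          rw [hF']; simp only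
          rw [Real.norm_eq_abs, abs_mul, abs_mul, abs_neg,
            abs_of_pos (Real.cosh_pos _), abs_of_pos (Real.exp_pos _),
            abs_of_pos (Real.cosh_pos _)]
      _ ≤ Real.cosh z * Real.exp (-(x/2) * Real.cosh z) * Real.cosh (α * z) := by
          apply mul_le_mul_of_nonneg_right _ (Real.cosh_pos _).le
          exact mul_le_mul_of_nonneg_left h1 (Real.cosh_pos _).le
      _ ≤ Real.exp z * Real.exp (-(x/2) * Real.cosh z) * Real.exp (|α| * z) := by
          have hcz : Real.cosh z ≤ Real.exp z := by
            have := cosh_le_exp_abs z; rwa [abs_of_nonneg hz'] at this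
          have hca := cosh_mul_le α z hz'
          have step : Real.cosh z * Real.exp (-(x/2) * Real.cosh z)
              ≤ Real.exp z * Real.exp (-(x/2) * Real.cosh z) :=
            mul_le_mul_of_nonneg_right hcz (Real.exp_pos _).le
          exact mul_le_mul step hca (Real.cosh_pos _).le (by positivity)
      _ = bound z := by
          rw [hbound]; simp only
          rw [show (1+|α|) * z = z + |α| * z by ring, Real.exp_add]; ring
  · apply integrable_master (x/2) (1+|α|) hx2
    · exact Continuous.aestronglyMeasurable (by continuity)
    · intro z _
      rw [abs_of_pos (by positivity)]
  · filter_upwards with z t _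
    have h1 : HasDerivAt (fun t => Real.exp (-t * Real.cosh z))
        ((-Real.cosh z) * Real.exp (-t * Real.cosh z)) t := by
      have : HasDerivAt (fun t : ℝ => -t * Real.cosh z) (-Real.cosh z) t := by
        simpa using (hasDerivAt_id t).neg.mul_const (Real.cosh z)
      simpa [mul_comm] using this.exp
    simpa [hF, hF', mul_assoc] using h1.mul_const (Real.cosh (α * z))

lemma sinh_le_mul_cosh {z : ℝ} (hz : 0 ≤ z) : Real.sinh z ≤ z * Real.cosh z := by
  have hmono : MonotoneOn (fun z => z * Real.cosh z - Real.sinh z) (Ici 0) := by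
    apply monotoneOn_of_deriv_nonneg (convex_Ici 0)
    · exact Continuous.continuousOn (by continuity)
    · apply Differentiable.differentiableOn
      fun_prop
    · intro w hw
      rw [interior_Ici] at hw
      have hd : HasDerivAt (fun z => z * Real.cosh z - Real.sinh z) (w * Real.sinh w) w := by
        have := ((hasDerivAt_id w).mul (Real.hasDerivAt_cosh w)).sub (Real.hasDerivAt_sinh w)
        refine this.congr_deriv ?_
        simp
      rw [hd.deriv]
      have hw' : (0:ℝ) < w := hw
      have hs : 0 ≤ Real.sinh w := by
        rw [Real.sinh_eq]
        have := Real.exp_le_exp.2 (by linarith : -w ≤ w)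
        linarith
      exact mul_nonneg (le_of_lt hw) hs
  have := hmono (self_mem_Ici) hz hz
  simp at this
  linarith

lemma cosh_le_one_add {z : ℝ} (hz : 0 ≤ z) : Real.cosh z ≤ 1 + z * Real.sinh z := by
  have hmono : MonotoneOn (fun z => 1 + z * Real.sinh z - Real.cosh z) (Ici 0) := by
    apply monotoneOn_of_deriv_nonneg (convex_Ici 0)
    · exact Continuous.continuousOn (by continuity)
    · apply Differentiable.differentiableOn
      fun_prop
    · intro w hw
      rw [interior_Ici] at hw
      have hd : HasDerivAt (fun z => 1 + z * Real.sinh z - Real.cosh z)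
          (w * Real.cosh w) w := by
        have := ((hasDerivAt_const w (1:ℝ)).add
          ((hasDerivAt_id w).mul (Real.hasDerivAt_sinh w))).sub (Real.hasDerivAt_cosh w)
        refine this.congr_deriv ?_
        simp
      rw [hd.deriv]
      exact mul_nonneg (le_of_lt hw) (Real.cosh_pos w).le
  have := hmono (self_mem_Ici) hz hz
  simp at this
  linarith

lemma besselK_mono_order {a b : ℝ} (ha : 0 ≤ a) (hab : a ≤ b) {x : ℝ} (hx : 0 < x) :
    besselK a x ≤ besselK b x := by
  rw [besselK, besselK]
  apply MeasureTheory.setIntegral_mono_on (besselK_integrableOn a hx)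
    (besselK_integrableOn b hx) measurableSet_Ioi
  intro z hz
  apply mul_le_mul_of_nonneg_left _ (Real.exp_pos _).le
  rw [Real.cosh_le_cosh]
  have hz' : (0:ℝ) ≤ z := le_of_lt hz
  rw [abs_mul, abs_mul, abs_of_nonneg hz', abs_of_nonneg ha, abs_of_nonneg (le_trans ha hab)]
  exact mul_le_mul_of_nonneg_right hab hz'

lemma besselK_lower (α : ℝ) {u : ℝ} (hu : 0 < u) :
    min 1 (1 / Real.sqrt u) * Real.exp (-u - 2) ≤ besselK α u := by
  set δ : ℝ := min 1 (1 / Real.sqrt u) with hδ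
  have hsu : 0 < Real.sqrt u := Real.sqrt_pos.2 hu
  have hδpos : 0 < δ := lt_min one_pos (by positivity)
  have hδ1 : δ ≤ 1 := min_le_left _ _
  have hδu : u * δ ^ 2 ≤ 1 := by
    rcases le_total 1 (1 / Real.sqrt u) with h | h
    · rw [hδ, min_eq_left h]
      rw [le_div_iff₀ hsu, one_mul] at h
      nlinarith [Real.sq_sqrt hu.le, Real.sqrt_nonneg u]
    · rw [hδ, min_eq_right h]
      rw [div_pow, one_pow, Real.sq_sqrt hu.le, mul_one_div, div_le_one hu]
  have hpt : ∀ z ∈ Ioc (0:ℝ) δ, Real.exp (-u - 2) ≤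
      Real.exp (-u * Real.cosh z) * Real.cosh (α * z) := by
    intro z hz
    have hz0 : 0 ≤ z := le_of_lt hz.1
    have h1 : Real.cosh z ≤ 1 + z * Real.sinh z := cosh_le_one_add hz0
    have h2 : Real.sinh z ≤ z * Real.cosh z := sinh_le_mul_cosh hz0
    have hcosh1 : Real.cosh z ≤ Real.cosh 1 := by
      rw [Real.cosh_le_cosh, abs_of_nonneg hz0, abs_one]; exact le_trans hz.2 hδ1
    have hcosh2 : Real.cosh 1 ≤ 2 := by
      rw [Real.cosh_eq]
      have h3 := Real.exp_one_lt_d9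
      have h4 : Real.exp (-1 : ℝ) ≤ 1 := by
        rw [Real.exp_le_one_iff]; norm_num
      linarith
    have hz2 : z * Real.sinh z ≤ 2 * z ^ 2 := by nlinarith
    have hz3 : z ^ 2 ≤ δ ^ 2 := by nlinarith [hz.2]
    have hmain : u * Real.cosh z ≤ u + 2 := by
      have h5 : u * z ^ 2 ≤ 1 := le_trans (mul_le_mul_of_nonneg_left hz3 hu.le) hδu
      nlinarith
    calc Real.exp (-u - 2) ≤ Real.exp (-u * Real.cosh z) := by
          rw [Real.exp_le_exp]; linarith
      _ ≤ Real.exp (-u * Real.cosh z) * Real.cosh (α * z) :=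
          le_mul_of_one_le_right (Real.exp_pos _).le (Real.one_le_cosh _)
  have hsub : Ioc (0:ℝ) δ ⊆ Ioi 0 := Ioc_subset_Ioi_self
  have hint := besselK_integrableOn α hu
  have hvol : (volume (Ioc (0:ℝ) δ)).toReal = δ := by
    rw [Real.volume_Ioc, sub_zero, ENNReal.toReal_ofReal hδpos.le]
  calc δ * Real.exp (-u - 2)
      = Real.exp (-u - 2) * (volume (Ioc (0:ℝ) δ)).toReal := by rw [hvol]; ring
    _ ≤ ∫ z in Ioc (0:ℝ) δ, Real.exp (-u * Real.cosh z) * Real.cosh (α * z) :=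
        by have h := MeasureTheory.setIntegral_ge_of_const_le measurableSet_Ioc
              (by rw [Real.volume_Ioc]; exact ENNReal.ofReal_ne_top) hpt
              (hint.mono_set hsub)
           rwa [smul_eq_mul, mul_comm, measureReal_def] at h
    _ ≤ ∫ z in Ioi (0:ℝ), Real.exp (-u * Real.cosh z) * Real.cosh (α * z) := by
        apply MeasureTheory.setIntegral_mono_set hint
        · filter_upwards with z
          positivity
        · exact HasSubset.Subset.eventuallyLE hsub
    _ = besselK α u := rfl

lemma sinh_exp_integral {u : ℝ} (hu : 0 < u) :
    ∫ z in Ioi (0:ℝ), Real.exp (-u * Real.cosh z) * Real.sinh z = Real.exp (-u) / u := by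
  set f : ℝ → ℝ := fun z => -(1/u) * Real.exp (-u * Real.cosh z) with hf
  have hderiv : ∀ z : ℝ, HasDerivAt f (Real.exp (-u * Real.cosh z) * Real.sinh z) z := by
    intro z
    have h1 : HasDerivAt (fun z => Real.exp (-u * Real.cosh z))
        (-u * Real.sinh z * Real.exp (-u * Real.cosh z)) z := by
      have := ((Real.hasDerivAt_cosh z).const_mul (-u)).exp
      simpa [mul_comm] using this
    have := h1.const_mul (-(1/u))
    refine this.congr_deriv ?_
    field_simp
  have hint : IntegrableOn (fun z => Real.exp (-u * Real.cosh z) * Real.sinh z) (Ioi 0) := by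
    apply integrable_master u 1 hu
    · exact Continuous.aestronglyMeasurable (by continuity)
    · intro z hz
      have hz' : (0:ℝ) ≤ z := le_of_lt hz
      rw [abs_mul, abs_of_pos (Real.exp_pos _), one_mul]
      apply mul_le_mul_of_nonneg_left _ (Real.exp_pos _).le
      refine le_trans (abs_sinh_le_cosh z) ?_
      have := cosh_le_exp_abs z; rwa [abs_of_nonneg hz'] at this
  have hlim : Tendsto f atTop (nhds 0) := by
    apply squeeze_zero_norm' (a := fun z => (1/u) * (Real.exp (2/u - u) * Real.exp (-z)))
    · filter_upwards [eventually_ge_atTop (0:ℝ)] with z hz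
      have kb := key_bound u 0 z hu hz
      rw [zero_mul, Real.exp_zero, mul_one] at kb
      calc ‖f z‖ = (1/u) * Real.exp (-u * Real.cosh z) := by
            rw [hf]; simp only [norm_mul, Real.norm_eq_abs, abs_neg, abs_of_pos (Real.exp_pos _),
              abs_of_pos (by positivity : (0:ℝ) < 1/u)]
        _ ≤ (1/u) * (Real.exp (2*(0+1)^2/u - u) * Real.exp (-z)) := by
            apply mul_le_mul_of_nonneg_left _ (by positivity : (0:ℝ) ≤ 1/u)
            calc Real.exp (-u * Real.cosh z)
                = Real.exp (-u * Real.cosh z) * Real.exp (0 * z) := by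
                  rw [zero_mul, Real.exp_zero, mul_one]
              _ ≤ _ := key_bound u 0 z hu hz
        _ = (1/u) * (Real.exp (2/u - u) * Real.exp (-z)) := by norm_num
    · rw [show (0:ℝ) = (1/u) * (Real.exp (2/u - u) * 0) by ring]
      exact ((Real.tendsto_exp_atBot.comp tendsto_neg_atTop_atBot).const_mul _).const_mul _
  have key := MeasureTheory.integral_Ioi_of_hasDerivAt_of_tendsto
    (Continuous.continuousWithinAt (by fun_prop)) (fun z _ => hderiv z) hint hlim
  rw [key]
  simp [hf, Real.cosh_zero]
  field_simp

lemma besselK_le_K0_add {β u : ℝ} (hβ : |β| ≤ 1) (hu : 0 < u) :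
    besselK β u ≤ besselK 0 u + Real.exp (-u) / u := by
  rw [← sinh_exp_integral hu]
  have h0 : besselK 0 u = ∫ z in Ioi (0:ℝ), Real.exp (-u * Real.cosh z) * Real.cosh (0 * z) := rfl
  rw [h0, ← MeasureTheory.integral_add (besselK_integrableOn 0 hu)
    (by
      have := sinh_exp_integral (u := u) hu
      apply integrable_master u 1 hu
      · exact Continuous.aestronglyMeasurable (by continuity)
      · intro z hz
        have hz' : (0:ℝ) ≤ z := le_of_lt hz
        rw [abs_mul, abs_of_pos (Real.exp_pos _), one_mul]
        apply mul_le_mul_of_nonneg_left _ (Real.exp_pos _).le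
        refine le_trans (abs_sinh_le_cosh z) ?_
        have := cosh_le_exp_abs z; rwa [abs_of_nonneg hz'] at this)]
  apply MeasureTheory.setIntegral_mono_on (besselK_integrableOn β hu) _ measurableSet_Ioi
  · intro z hz
    have hz' : (0:ℝ) ≤ z := le_of_lt hz
    rw [← mul_add]
    apply mul_le_mul_of_nonneg_left _ (Real.exp_pos _).le
    have h1 : Real.cosh (β * z) ≤ Real.cosh z := by
      rw [Real.cosh_le_cosh, abs_mul, abs_of_nonneg hz']
      calc |β| * z ≤ 1 * z := mul_le_mul_of_nonneg_right hβ hz'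
        _ = z := one_mul z
    have h2 : Real.cosh z ≤ 1 + Real.sinh z := by
      have := Real.cosh_sub_sinh z  -- cosh - sinh = exp(-z) ?
      have h3 : Real.exp (-z) ≤ 1 := Real.exp_le_one_iff.2 (by linarith)
      linarith
    simpa using le_trans h1 h2
  · apply Integrable.add (besselK_integrableOn 0 hu)
    apply integrable_master u 1 hu
    · exact Continuous.aestronglyMeasurable (by continuity)
    · intro z hz
      have hz' : (0:ℝ) ≤ z := le_of_lt hz
      rw [abs_mul, abs_of_pos (Real.exp_pos _), one_mul]
      apply mul_le_mul_of_nonneg_left _ (Real.exp_pos _).le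
      refine le_trans (abs_sinh_le_cosh z) ?_
      have := cosh_le_exp_abs z; rwa [abs_of_nonneg hz'] at this

lemma ratio_upper {ν u u₀ : ℝ} (hν0 : 0 ≤ ν) (hν1 : ν ≤ 1) (hu0 : 0 < u₀) (hu : u₀ ≤ u) :
    besselK (1-ν) u ≤ (1 + Real.exp 2 * max (1/u₀) (1/Real.sqrt u₀)) * besselK ν u := by
  have hu' : 0 < u := lt_of_lt_of_le hu0 hu
  have hK : 0 < besselK ν u := besselK_pos ν hu'
  have h1 : besselK (1-ν) u ≤ besselK 0 u + Real.exp (-u) / u :=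
    besselK_le_K0_add (by rw [abs_of_nonneg (by linarith)]; linarith) hu'
  have h2 : besselK 0 u ≤ besselK ν u := besselK_mono_order le_rfl hν0 hu'
  have hlow := besselK_lower ν hu'
  have hs : 0 < Real.sqrt u := Real.sqrt_pos.2 hu'
  have hs0 : 0 < Real.sqrt u₀ := Real.sqrt_pos.2 hu0
  have hee : Real.exp (-u) = Real.exp 2 * Real.exp (-u-2) := by rw [← Real.exp_add]; ring_nf
  have h3 : Real.exp (-u) / u ≤ Real.exp 2 * max (1/u₀) (1/Real.sqrt u₀) * besselK ν u := by
    rcases le_total 1 (1/Real.sqrt u) with h | h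
    · rw [min_eq_left h, one_mul] at hlow
      have h4 : 1/u ≤ max (1/u₀) (1/Real.sqrt u₀) :=
        le_trans (one_div_le_one_div_of_le hu0 hu) (le_max_left _ _)
      calc Real.exp (-u)/u = Real.exp 2 * Real.exp (-u-2) * (1/u) := by rw [hee]; ring
        _ ≤ Real.exp 2 * besselK ν u * (1/u) := by
            apply mul_le_mul_of_nonneg_right
              (mul_le_mul_of_nonneg_left hlow (Real.exp_pos 2).le) (by positivity)
        _ ≤ Real.exp 2 * besselK ν u * max (1/u₀) (1/Real.sqrt u₀) :=
            mul_le_mul_of_nonneg_left h4 (mul_nonneg (Real.exp_pos 2).le hK.le)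
        _ = Real.exp 2 * max (1/u₀) (1/Real.sqrt u₀) * besselK ν u := by ring
    · rw [min_eq_right h] at hlow
      have hlow2 : Real.exp (-u-2) ≤ Real.sqrt u * besselK ν u := by
        have h5 := mul_le_mul_of_nonneg_left hlow hs.le
        rwa [← mul_assoc, mul_one_div, div_self hs.ne', one_mul] at h5
      have h6 : Real.sqrt u / u = 1 / Real.sqrt u := by
        rw [div_eq_div_iff hu'.ne' hs.ne']
        rw [one_mul, Real.mul_self_sqrt hu'.le]
      have h7 : 1/Real.sqrt u ≤ max (1/u₀) (1/Real.sqrt u₀) :=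
        le_trans (one_div_le_one_div_of_le hs0 (Real.sqrt_le_sqrt hu)) (le_max_right _ _)
      calc Real.exp (-u)/u = Real.exp 2 * Real.exp (-u-2) * (1/u) := by rw [hee]; ring
        _ ≤ Real.exp 2 * (Real.sqrt u * besselK ν u) * (1/u) := by
            apply mul_le_mul_of_nonneg_right
              (mul_le_mul_of_nonneg_left hlow2 (Real.exp_pos 2).le) (by positivity)
        _ = Real.exp 2 * besselK ν u * (Real.sqrt u / u) := by ring
        _ = Real.exp 2 * besselK ν u * (1/Real.sqrt u) := by rw [h6]
        _ ≤ Real.exp 2 * besselK ν u * max (1/u₀) (1/Real.sqrt u₀) :=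
            mul_le_mul_of_nonneg_left h7 (mul_nonneg (Real.exp_pos 2).le hK.le)
        _ = Real.exp 2 * max (1/u₀) (1/Real.sqrt u₀) * besselK ν u := by ring
  calc besselK (1-ν) u ≤ besselK 0 u + Real.exp (-u) / u := h1
    _ ≤ besselK ν u + Real.exp 2 * max (1/u₀) (1/Real.sqrt u₀) * besselK ν u := by linarith
    _ = (1 + Real.exp 2 * max (1/u₀) (1/Real.sqrt u₀)) * besselK ν u := by ring

lemma hasDerivAt_rpow_mul_besselK (ℓ p α : ℝ) (hℓ : 0 ≤ ℓ) (hp : p = (ℓ+1) * α)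
    {t : ℝ} (ht : 0 < t) :
    HasDerivAt (fun s : ℝ => s ^ p * besselK α (s ^ (ℓ+1) / (ℓ+1)))
      (-(t ^ (p + ℓ) * besselK (1-α) (t ^ (ℓ+1) / (ℓ+1)))) t := by
  have hl1 : (0:ℝ) < ℓ + 1 := by linarith
  have hut : 0 < t ^ (ℓ+1) / (ℓ+1) := div_pos (Real.rpow_pos_of_pos ht _) hl1
  have hu : HasDerivAt (fun s : ℝ => s ^ (ℓ+1) / (ℓ+1)) (t ^ ℓ) t := by
    have h := (Real.hasDerivAt_rpow_const (x := t) (p := ℓ+1) (Or.inl ht.ne')).div_const (ℓ+1)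
    have he : (ℓ+1) * t ^ (ℓ+1-1) / (ℓ+1) = t ^ ℓ := by
      rw [show ℓ+1-1 = ℓ by ring]
      field_simp
    rwa [he] at h
  have hK : HasDerivAt (fun s : ℝ => besselK α (s ^ (ℓ+1) / (ℓ+1)))
      ((-((α / (t ^ (ℓ+1) / (ℓ+1))) * besselK α (t ^ (ℓ+1) / (ℓ+1))
        + besselK (1-α) (t ^ (ℓ+1) / (ℓ+1)))) * t ^ ℓ) t :=
    by have := (besselK_hasDerivAt α hut).comp t hu; exact this
  have hr : HasDerivAt (fun s : ℝ => s ^ p) (p * t ^ (p-1)) t :=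
    Real.hasDerivAt_rpow_const (Or.inl ht.ne')
  have hD := hr.mul hK
  refine hD.congr_deriv ?_
  have htne : t ≠ 0 := ht.ne'
  have hℓne : t ^ ℓ ≠ 0 := (Real.rpow_pos_of_pos ht ℓ).ne'
  have e3 : t ^ p = t ^ (p-1) * t := by
    rw [← Real.rpow_add_one htne (p-1), sub_add_cancel]
  have e4 : t ^ (ℓ+1) = t ^ ℓ * t := Real.rpow_add_one htne ℓ
  have e5 : t ^ (p+ℓ) = t ^ (p-1) * (t ^ ℓ * t) := by
    rw [show p+ℓ = (p-1)+(ℓ+1) by ring, Real.rpow_add ht, e4]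
  rw [e5, e3, e4]
  rw [hp]
  field_simp
  ring

/-- Properties of `λ(t) = C_ℓ t^{1/2} K_{1/(2ℓ+2)}(t^{ℓ+1}/(ℓ+1))`: `λ` and `-λ'`
are positive and decreasing on `[t₀,∞)`, `λ(t), λ'(t) → 0` as `t → ∞`, and
`-λ'(t)/(λ(t) t^ℓ)` is bounded between `1/C` and `C` for some `C > 1`. -/
theorem stmt_12 (ℓ t₀ Cℓ : ℝ) (hℓ : 0 ≤ ℓ) (ht₀ : 0 < t₀)
    (lam : ℝ → ℝ)
    (hlam : ∀ t, lam t =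
      Cℓ * t ^ ((1 : ℝ) / 2) * besselK (1 / (2 * ℓ + 2)) (t ^ (ℓ + 1) / (ℓ + 1)))
    (hnorm : lam t₀ = 1) :
    (∀ t ≥ t₀, 0 < lam t) ∧ AntitoneOn lam (Set.Ici t₀) ∧
    (∀ t ≥ t₀, 0 < -deriv lam t) ∧ AntitoneOn (fun t => -deriv lam t) (Set.Ici t₀) ∧
    Tendsto lam atTop (nhds 0) ∧ Tendsto (deriv lam) atTop (nhds 0) ∧
    ∃ C : ℝ, 1 < C ∧ ∀ t ≥ t₀,
      1 / C ≤ -deriv lam t / (lam t * t ^ ℓ) ∧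
      -deriv lam t / (lam t * t ^ ℓ) ≤ C := by
  have hl1 : (0:ℝ) < ℓ + 1 := by linarith
  set ν : ℝ := 1 / (2 * ℓ + 2) with hνdef
  have hν0 : 0 < ν := by rw [hνdef]; positivity
  have hνhalf : ν ≤ 1/2 := by
    rw [hνdef]
    rw [div_le_div_iff₀ (by linarith) (by norm_num)]
    linarith
  have hν1 : ν ≤ 1 := by linarith
  have hp1 : (1:ℝ)/2 = (ℓ+1) * ν := by
    rw [hνdef]; field_simp
  have hp2 : ℓ + 1/2 = (ℓ+1) * (1-ν) := by
    rw [hνdef]; field_simp; ring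
  have hupos : ∀ t : ℝ, 0 < t → 0 < t ^ (ℓ+1) / (ℓ+1) :=
    fun t ht => div_pos (Real.rpow_pos_of_pos ht _) hl1
  -- G is -λ'
  set G : ℝ → ℝ := fun s => Cℓ * (s ^ (ℓ + 1/2) * besselK (1-ν) (s ^ (ℓ+1) / (ℓ+1))) with hG
  have hlamfun : lam = fun s => Cℓ * (s ^ ((1:ℝ)/2) * besselK ν (s ^ (ℓ+1) / (ℓ+1))) := by
    funext s; rw [hlam s, mul_assoc]
  have hlam' : ∀ t : ℝ, 0 < t → HasDerivAt lam (-G t) t := by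
    intro t ht
    have h := (hasDerivAt_rpow_mul_besselK ℓ (1/2) ν hℓ hp1 ht).const_mul Cℓ
    rw [hlamfun]
    refine h.congr_deriv ?_
    rw [hG]
    simp only
    rw [show (1:ℝ)/2 + ℓ = ℓ + 1/2 by ring]
    ring
  have hG' : ∀ t : ℝ, 0 < t → HasDerivAt G (-(t ^ (2*ℓ) * lam t)) t := by
    intro t ht
    have h := (hasDerivAt_rpow_mul_besselK ℓ (ℓ+1/2) (1-ν) hℓ hp2 ht).const_mul Cℓ
    have hfun : G = fun s : ℝ => Cℓ * (s ^ (ℓ+1/2) * besselK (1-ν) (s ^ (ℓ+1) / (ℓ+1))) := rfl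
    rw [hfun]
    refine h.congr_deriv ?_
    rw [hlam t]
    have e1 : (1:ℝ) - (1-ν) = ν := by ring
    rw [e1]
    have e2 : t ^ (ℓ + 1/2 + ℓ) = t ^ (2*ℓ) * t ^ ((1:ℝ)/2) := by
      rw [← Real.rpow_add ht]
      rw [show 2*ℓ + (1:ℝ)/2 = ℓ + 1/2 + ℓ by ring]
    rw [e2]
    ring
  have hCpos : 0 < Cℓ := by
    have h := hnorm
    rw [hlam t₀] at h
    have hK := besselK_pos ν (hupos t₀ ht₀)
    have hr := Real.rpow_pos_of_pos ht₀ ((1:ℝ)/2)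
    nlinarith [mul_pos hr hK]
  have hGpos : ∀ t : ℝ, 0 < t → 0 < G t := by
    intro t ht
    exact mul_pos hCpos (mul_pos (Real.rpow_pos_of_pos ht _)
      (besselK_pos _ (hupos t ht)))
  have hlampos : ∀ t : ℝ, 0 < t → 0 < lam t := by
    intro t ht
    rw [hlam t]
    exact mul_pos (mul_pos hCpos (Real.rpow_pos_of_pos ht _)) (besselK_pos _ (hupos t ht))
  have hderiv_eq : ∀ t : ℝ, 0 < t → deriv lam t = -G t :=
    fun t ht => (hlam' t ht).deriv
  have ht₀t : ∀ t : ℝ, t ∈ Ici t₀ → 0 < t := fun t ht => lt_of_lt_of_le ht₀ ht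
  have hTend : ∀ β p : ℝ,
      Tendsto (fun t => Cℓ * (t ^ p * besselK β (t ^ (ℓ+1) / (ℓ+1)))) atTop (nhds 0) := by
    intro β p
    apply squeeze_zero_norm'
      (a := fun t => (Cℓ * Real.exp 1 * besselK β 1) * (t ^ p * Real.exp (-(1/(ℓ+1)) * t)))
    · filter_upwards [eventually_ge_atTop (1:ℝ), eventually_ge_atTop (ℓ+1)] with t h1t hlt
      have htpos : 0 < t := lt_of_lt_of_le one_pos h1t
      have htl : t ≤ t ^ (ℓ+1) := by
        calc t = t ^ (1:ℝ) := (Real.rpow_one t).symm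
          _ ≤ t ^ (ℓ+1) := Real.rpow_le_rpow_of_exponent_le h1t (by linarith)
      have hut1 : (1:ℝ) ≤ t ^ (ℓ+1) / (ℓ+1) := by
        rw [le_div_iff₀ hl1, one_mul]
        linarith
      have hdec := besselK_decay β one_pos hut1
      have hK1 := besselK_pos β one_pos
      have hKpos := besselK_pos β (hupos t htpos)
      have hrp := Real.rpow_pos_of_pos htpos p
      have hexp : Real.exp (-(t ^ (ℓ+1) / (ℓ+1) - 1))
          ≤ Real.exp 1 * Real.exp (-(1/(ℓ+1)) * t) := by
        rw [← Real.exp_add, Real.exp_le_exp]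
        have hd : t / (ℓ+1) ≤ t ^ (ℓ+1) / (ℓ+1) := by gcongr
        have h2 : (1/(ℓ+1)) * t = t / (ℓ+1) := by ring
        linarith
      calc ‖Cℓ * (t ^ p * besselK β (t ^ (ℓ+1) / (ℓ+1)))‖
          = Cℓ * (t ^ p * besselK β (t ^ (ℓ+1) / (ℓ+1))) := by
            rw [Real.norm_eq_abs, abs_of_pos (mul_pos hCpos (mul_pos hrp hKpos))]
        _ ≤ Cℓ * (t ^ p * (Real.exp (-(t ^ (ℓ+1) / (ℓ+1) - 1)) * besselK β 1)) := by
            apply mul_le_mul_of_nonneg_left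
              (mul_le_mul_of_nonneg_left hdec hrp.le) hCpos.le
        _ ≤ Cℓ * (t ^ p * ((Real.exp 1 * Real.exp (-(1/(ℓ+1)) * t)) * besselK β 1)) := by
            apply mul_le_mul_of_nonneg_left
              (mul_le_mul_of_nonneg_left
                (mul_le_mul_of_nonneg_right hexp hK1.le) hrp.le) hCpos.le
        _ = (Cℓ * Real.exp 1 * besselK β 1) * (t ^ p * Real.exp (-(1/(ℓ+1)) * t)) := by ring
    · rw [show (0:ℝ) = (Cℓ * Real.exp 1 * besselK β 1) * 0 by ring]
      exact (tendsto_rpow_mul_exp_neg_mul_atTop_nhds_zero p (1/(ℓ+1)) (by positivity)).const_mul _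
  refine ⟨?_, ?_, ?_, ?_, ?_, ?_, ?_⟩
  · exact fun t ht => hlampos t (lt_of_lt_of_le ht₀ ht)
  · -- AntitoneOn lam
    apply antitoneOn_of_deriv_nonpos (convex_Ici t₀)
    · intro t ht
      exact (hlam' t (ht₀t t ht)).continuousAt.continuousWithinAt
    · intro t ht
      rw [interior_Ici] at ht
      exact (hlam' t (lt_trans ht₀ ht)).differentiableAt.differentiableWithinAt
    · intro t ht
      rw [interior_Ici] at ht
      have htpos : 0 < t := lt_trans ht₀ ht
      rw [hderiv_eq t htpos]
      linarith [hGpos t htpos]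
  · intro t ht
    rw [hderiv_eq t (lt_of_lt_of_le ht₀ ht), neg_neg]
    exact hGpos t (lt_of_lt_of_le ht₀ ht)
  · -- AntitoneOn -deriv lam
    have hanti : AntitoneOn G (Ici t₀) := by
      apply antitoneOn_of_deriv_nonpos (convex_Ici t₀)
      · intro t ht
        exact (hG' t (ht₀t t ht)).continuousAt.continuousWithinAt
      · intro t ht
        rw [interior_Ici] at ht
        exact (hG' t (lt_trans ht₀ ht)).differentiableAt.differentiableWithinAt
      · intro t ht
        rw [interior_Ici] at ht
        have htpos : 0 < t := lt_trans ht₀ ht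
        rw [(hG' t htpos).deriv]
        have := hlampos t htpos
        have := Real.rpow_pos_of_pos htpos (2*ℓ)
        nlinarith
    intro a ha b hb hab
    simp only
    rw [hderiv_eq a (ht₀t a ha), hderiv_eq b (ht₀t b hb), neg_neg, neg_neg]
    exact hanti ha hb hab
  · -- Tendsto lam atTop 0
    rw [hlamfun]
    exact hTend ν (1/2)
  · -- Tendsto deriv lam atTop 0
    have h := (hTend (1-ν) (ℓ+1/2)).neg
    rw [neg_zero] at h
    refine Tendsto.congr' ?_ h
    filter_upwards [eventually_gt_atTop (0:ℝ)] with t ht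
    rw [hderiv_eq t ht, hG]
  · -- ratio bounds
    set u₀ : ℝ := t₀ ^ (ℓ+1) / (ℓ+1) with hu₀
    have hu₀pos : 0 < u₀ := hupos t₀ ht₀
    set Cr : ℝ := 1 + Real.exp 2 * max (1/u₀) (1/Real.sqrt u₀) with hCr
    have hCrpos : 0 < Real.exp 2 * max (1/u₀) (1/Real.sqrt u₀) := by
      apply mul_pos (Real.exp_pos 2)
      exact lt_of_lt_of_le (by positivity) (le_max_left _ _)
    have hCr1 : 1 ≤ Cr := by rw [hCr]; linarith
    refine ⟨Cr + 1, by linarith, ?_⟩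
    intro t ht
    have htpos : 0 < t := lt_of_lt_of_le ht₀ ht
    have hA := besselK_pos ν (hupos t htpos)
    have hB := besselK_pos (1-ν) (hupos t htpos)
    have hmono_u : u₀ ≤ t ^ (ℓ+1) / (ℓ+1) := by
      rw [hu₀]
      gcongr
    have e0 : t ^ ((1:ℝ)/2) * t ^ ℓ = t ^ (ℓ + 1/2) := by
      rw [← Real.rpow_add htpos, show (1:ℝ)/2 + ℓ = ℓ + 1/2 by ring]
    have hPne : Cℓ * t ^ (ℓ + 1/2) ≠ 0 :=
      (mul_pos hCpos (Real.rpow_pos_of_pos htpos _)).ne'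
    have hratio_eq : -deriv lam t / (lam t * t ^ ℓ)
        = besselK (1-ν) (t ^ (ℓ+1) / (ℓ+1)) / besselK ν (t ^ (ℓ+1) / (ℓ+1)) := by
      rw [hderiv_eq t htpos, neg_neg, hlam t]
      have e1 : Cℓ * t ^ ((1:ℝ)/2) * besselK ν (t ^ (ℓ+1) / (ℓ+1)) * t ^ ℓ
          = (Cℓ * t ^ (ℓ + 1/2)) * besselK ν (t ^ (ℓ+1) / (ℓ+1)) := by
        rw [← e0]; ring
      have e2 : G t = (Cℓ * t ^ (ℓ + 1/2)) * besselK (1-ν) (t ^ (ℓ+1) / (ℓ+1)) := by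
        rw [hG]; ring
      rw [e1, e2, mul_div_mul_left _ _ hPne]
    rw [hratio_eq]
    have hmono := besselK_mono_order hν0.le (by linarith : ν ≤ 1-ν) (hupos t htpos)
    have hup := ratio_upper hν0.le hν1 hu₀pos hmono_u
    constructor
    · have h1 : (1:ℝ) ≤ besselK (1-ν) (t ^ (ℓ+1) / (ℓ+1)) / besselK ν (t ^ (ℓ+1) / (ℓ+1)) :=
        (one_le_div hA).2 hmono
      have h2 : 1 / (Cr + 1) ≤ 1 := by
        rw [div_le_one (by linarith)]; linarith
      linarith
    · rw [div_le_iff₀ hA]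
      calc besselK (1-ν) (t ^ (ℓ+1) / (ℓ+1)) ≤ Cr * besselK ν (t ^ (ℓ+1) / (ℓ+1)) := by
            rw [hCr]; exact hup
        _ ≤ (Cr + 1) * besselK ν (t ^ (ℓ+1) / (ℓ+1)) := by nlinarith
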